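/- Let p and p̃ be distinct prime numbers and let d, e, d̃, ẽ be integers with d² − d·e + e² = p and d̃² − d̃·ẽ + ẽ² = p̃. Then there is no ℚ-algebra isomorphism from ℚ[x,y]/(x³, y·(y + d̃·x)·(y + ẽ·x)) to ℚ[x,y]/(x³, y·(y + d·x)·(y + e·x)) mapping the ℚ-span of the classes of x and y onto the ℚ-span of the classes of x and y. -/

import Mathlib

noncomputable section

open MvPolynomial

/-- The relations ideal for `ℚ[x,y]/(x³, y·(y+d·x)·(y+e·x))`. -/
def Qrel (d e : ℤ) : Ideal (MvPolynomial (Fin 2) ℚ) :=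
  Ideal.span {X 0 ^ 3, X 1 * (X 1 + (d : ℚ) • X 0) * (X 1 + (e : ℚ) • X 0)}

/-- `QR d e = ℚ[x,y]/(x³, y·(y+d·x)·(y+e·x))`. -/
abbrev QR (d e : ℤ) := MvPolynomial (Fin 2) ℚ ⧸ Qrel d e

/-- The class of `x` in `QR d e`. -/
def qx (d e : ℤ) : QR d e := Ideal.Quotient.mk (Qrel d e) (X 0)

/-- The class of `y` in `QR d e`. -/
def qy (d e : ℤ) : QR d e := Ideal.Quotient.mk (Qrel d e) (X 1)

/-- The `ℚ`-span of the classes of `x` and `y` (the degree-2 part). -/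
def qdeg2 (d e : ℤ) : Submodule ℚ (QR d e) := Submodule.span ℚ {qx d e, qy d e}

/-! ### Coefficient extraction machinery -/

def mono (a b : ℕ) : Fin 2 →₀ ℕ := Finsupp.single 0 a + Finsupp.single 1 b

lemma peel1 (p : MvPolynomial (Fin 2) ℚ) (a b : ℕ) :
    coeff (mono a (b+1)) (p * X 1) = coeff (mono a b) p := by
  rw [coeff_mul_X']
  have h1 : (1 : Fin 2) ∈ (mono a (b+1)).support := by
    simp [mono, Finsupp.mem_support_iff, Finsupp.single_apply]
  rw [if_pos h1]
  congr 1
  ext i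
  fin_cases i <;> simp [mono, Finsupp.single_apply]

lemma peel1' (p : MvPolynomial (Fin 2) ℚ) (a : ℕ) :
    coeff (mono a 0) (p * X 1) = 0 := by
  rw [coeff_mul_X']
  have h1 : (1 : Fin 2) ∉ (mono a 0).support := by
    simp [mono, Finsupp.mem_support_iff, Finsupp.single_apply]
  rw [if_neg h1]

lemma peel0 (p : MvPolynomial (Fin 2) ℚ) (a b : ℕ) :
    coeff (mono (a+1) b) (p * X 0) = coeff (mono a b) p := by
  rw [coeff_mul_X']
  have h1 : (0 : Fin 2) ∈ (mono (a+1) b).support := by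
    simp [mono, Finsupp.mem_support_iff, Finsupp.single_apply]
  rw [if_pos h1]
  congr 1
  ext i
  fin_cases i <;> simp [mono, Finsupp.single_apply]

lemma peel0' (p : MvPolynomial (Fin 2) ℚ) (b : ℕ) :
    coeff (mono 0 b) (p * X 0) = 0 := by
  rw [coeff_mul_X']
  have h1 : (0 : Fin 2) ∉ (mono 0 b).support := by
    simp [mono, Finsupp.mem_support_iff, Finsupp.single_apply]
  rw [if_neg h1]

lemma pA3 (p : MvPolynomial (Fin 2) ℚ) (a : ℕ) :
    coeff (mono a 3) (p * X 1) = coeff (mono a 2) p := peel1 p a 2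
lemma pA2 (p : MvPolynomial (Fin 2) ℚ) (a : ℕ) :
    coeff (mono a 2) (p * X 1) = coeff (mono a 1) p := peel1 p a 1
lemma pA1 (p : MvPolynomial (Fin 2) ℚ) (a : ℕ) :
    coeff (mono a 1) (p * X 1) = coeff (mono a 0) p := peel1 p a 0
lemma pA0 (p : MvPolynomial (Fin 2) ℚ) (a : ℕ) :
    coeff (mono a 0) (p * X 1) = 0 := peel1' p a
lemma pB3 (p : MvPolynomial (Fin 2) ℚ) (b : ℕ) :
    coeff (mono 3 b) (p * X 0) = coeff (mono 2 b) p := peel0 p 2 b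
lemma pB2 (p : MvPolynomial (Fin 2) ℚ) (b : ℕ) :
    coeff (mono 2 b) (p * X 0) = coeff (mono 1 b) p := peel0 p 1 b
lemma pB1 (p : MvPolynomial (Fin 2) ℚ) (b : ℕ) :
    coeff (mono 1 b) (p * X 0) = coeff (mono 0 b) p := peel0 p 0 b
lemma pB0 (p : MvPolynomial (Fin 2) ℚ) (b : ℕ) :
    coeff (mono 0 b) (p * X 0) = 0 := peel0' p b
lemma mono00 : mono 0 0 = (0 : Fin 2 →₀ ℕ) := by
  ext i; fin_cases i <;> simp [mono]
lemma base1 : coeff (mono 0 0) (1 : MvPolynomial (Fin 2) ℚ) = 1 := by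
  rw [mono00]; simp

lemma relA {d e : ℤ} {P : MvPolynomial (Fin 2) ℚ} (hP : P ∈ Qrel d e) :
    coeff (mono 1 0) P = 0 ∧ coeff (mono 0 1) P = 0 ∧
    coeff (mono 1 2) P = ((d:ℚ)+e) * coeff (mono 0 3) P ∧
    coeff (mono 2 1) P = ((d:ℚ)*e) * coeff (mono 0 3) P := by
  rw [Qrel, Ideal.mem_span_pair] at hP
  obtain ⟨u, v, huv⟩ := hP
  have hP' : P = ((u*X 0)*X 0)*X 0 + ((((v*X 1)*X 1)*X 1) +
      (C (d:ℚ) * (((v*X 0)*X 1)*X 1) + (C (e:ℚ) * (((v*X 0)*X 1)*X 1) +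
        C (d:ℚ) * (C (e:ℚ) * (((v*X 0)*X 0)*X 1))))) := by
    rw [← huv, smul_eq_C_mul, smul_eq_C_mul]; ring
  subst hP'
  refine ⟨?_, ?_, ?_, ?_⟩ <;>
    simp only [coeff_add, coeff_C_mul, pA3, pA2, pA1, pA0, pB3, pB2, pB1, pB0] <;> ring

lemma relB (c1 c2 c3 b : ℚ) :
    coeff (mono 0 3) ((C c1 * X 0 + C b * X 1) * (C c2 * X 0 + C b * X 1) *
      (C c3 * X 0 + C b * X 1)) = b^3 ∧
    coeff (mono 1 2) ((C c1 * X 0 + C b * X 1) * (C c2 * X 0 + C b * X 1) *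
      (C c3 * X 0 + C b * X 1)) = (c1+c2+c3)*b^2 ∧
    coeff (mono 2 1) ((C c1 * X 0 + C b * X 1) * (C c2 * X 0 + C b * X 1) *
      (C c3 * X 0 + C b * X 1)) = (c1*c2+c1*c3+c2*c3)*b := by
  have hexp : (C c1 * X 0 + C b * X 1) * (C c2 * X 0 + C b * X 1) *
      (C c3 * X 0 + C b * X 1) =
      C (c1*c2*c3) * (((1*X 0)*X 0)*X (0:Fin 2)) +
      (C (c1*c2*b + c1*b*c3 + b*c2*c3) * (((1*X 0)*X 0)*X 1) +
      (C (c1*b*b + b*c2*b + b*b*c3) * (((1*X 0)*X 1)*X 1) +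
      C (b*b*b) * (((1*X 1)*X 1)*X 1))) := by
    simp only [map_mul, map_add]; ring
  rw [hexp]
  refine ⟨?_, ?_, ?_⟩ <;>
    simp only [coeff_add, coeff_C_mul, pA3, pA2, pA1, pA0, pB3, pB2, pB1, pB0, base1] <;> ring

lemma coeff_lin10 (q1 q2 : ℚ) :
    coeff (mono 1 0) (C q1 * (1*X (0:Fin 2)) + C q2 * (1*X 1)) = q1 := by
  simp only [coeff_add, coeff_C_mul, pA0, pB1, base1]; ring
lemma coeff_lin01 (q1 q2 : ℚ) :
    coeff (mono 0 1) (C q1 * (1*X (0:Fin 2)) + C q2 * (1*X 1)) = q2 := by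
  simp only [coeff_add, coeff_C_mul, pA1, pA0, pB0, base1]; ring

/-! ### Quotient-level lemmas -/

abbrev mkA (d e : ℤ) : MvPolynomial (Fin 2) ℚ →ₐ[ℚ] QR d e := Ideal.Quotient.mkₐ ℚ (Qrel d e)

lemma mkA_X0 (d e : ℤ) : mkA d e (X 0) = qx d e := rfl
lemma mkA_X1 (d e : ℤ) : mkA d e (X 1) = qy d e := rfl

lemma mk_lin (d e : ℤ) (c1 c2 : ℚ) :
    mkA d e (C c1 * (1 * X 0) + C c2 * (1 * X 1)) = c1 • qx d e + c2 • qy d e := by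
  rw [one_mul, one_mul, ← smul_eq_C_mul, ← smul_eq_C_mul, map_add, map_smul, map_smul]
  rfl

lemma mk_lin' (d e : ℤ) (c1 c2 : ℚ) :
    mkA d e (C c1 * X 0 + C c2 * X 1) = c1 • qx d e + c2 • qy d e := by
  rw [← smul_eq_C_mul, ← smul_eq_C_mul, map_add, map_smul, map_smul]
  rfl

/-- Linear independence of the classes of `x` and `y`. -/
lemma indep {d e : ℤ} {q1 q2 : ℚ} (h : q1 • qx d e + q2 • qy d e = 0) :
    q1 = 0 ∧ q2 = 0 := by
  have h0 : mkA d e (C q1 * (1 * X 0) + C q2 * (1 * X 1)) = 0 := by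
    rw [mk_lin]; exact h
  have hm : (C q1 * (1 * X 0) + C q2 * (1 * X 1)) ∈ Qrel d e :=
    Ideal.Quotient.eq_zero_iff_mem.mp h0
  obtain ⟨h1, h2, -, -⟩ := relA hm
  rw [coeff_lin10] at h1
  rw [coeff_lin01] at h2
  exact ⟨h1, h2⟩

lemma qx_ne_zero (d e : ℤ) : qx d e ≠ 0 := by
  intro h
  have : (1:ℚ) • qx d e + (0:ℚ) • qy d e = 0 := by rw [h]; simp
  exact one_ne_zero (indep this).1

/-- From a vanishing product of "linear" elements, membership of the lifted polynomial. -/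
lemma prodMemQ {d e : ℤ} {c1 c2 c3 b : ℚ}
    (h : (c1 • qx d e + b • qy d e) * (c2 • qx d e + b • qy d e) *
      (c3 • qx d e + b • qy d e) = 0) :
    (C c1 * X 0 + C b * X 1) * (C c2 * X 0 + C b * X 1) *
      (C c3 * X 0 + C b * X 1) ∈ Qrel d e := by
  apply Ideal.Quotient.eq_zero_iff_mem.mp
  show mkA d e _ = 0
  rw [map_mul, map_mul, mk_lin', mk_lin', mk_lin']
  exact h

lemma numth {p pt : ℕ} (hp : p.Prime) (hpt : pt.Prime) (hne : p ≠ pt) {a β : ℚ}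
    (ha : a ≠ 0) (hβ : β ≠ 0) (h : (p : ℚ) * β ^ 2 = (pt : ℚ) * a ^ 2) : False := by
  obtain ⟨q, hq0, h1⟩ : ∃ q : ℚ, q ≠ 0 ∧ (p : ℚ) = pt * q ^ 2 := by
    refine ⟨a / β, div_ne_zero ha hβ, ?_⟩
    field_simp
    linear_combination h
  have hdQ : (q.den : ℚ) ≠ 0 := by exact_mod_cast q.den_nz
  have hnd : (q.num : ℚ) = q * q.den := by
    rw [Rat.mul_den_eq_num]
  have h2 : (p : ℚ) * (q.den : ℚ) ^ 2 = pt * (q.num : ℚ) ^ 2 := by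
    rw [h1, hnd]; ring
  have h3 : (p : ℤ) * (q.den : ℤ) ^ 2 = pt * q.num ^ 2 := by exact_mod_cast h2
  have h4 : p * q.den ^ 2 = pt * q.num.natAbs ^ 2 := by
    have := congrArg Int.natAbs h3
    simpa [Int.natAbs_mul, Int.natAbs_pow] using this
  have hm : q.num.natAbs ≠ 0 := by
    simpa [Int.natAbs_ne_zero] using Rat.num_ne_zero.mpr hq0
  have hn : q.den ≠ 0 := q.den_nz
  have hfac := congrArg (fun k => k.factorization p) h4
  simp only [Nat.factorization_mul hp.ne_zero (pow_ne_zero 2 hn),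
    Nat.factorization_mul hpt.ne_zero (pow_ne_zero 2 hm),
    Nat.factorization_pow, Finsupp.add_apply, Finsupp.smul_apply,
    hp.factorization, hpt.factorization, Finsupp.single_apply] at hfac
  have hne' : pt ≠ p := fun hh => hne hh.symm
  rw [if_true, if_neg hne', smul_eq_mul, smul_eq_mul, zero_add] at hfac
  omega

/-! ### Main theorem -/

set_option maxHeartbeats 1000000 in
/-- If `p ≠ p̃` are primes with `d² − d·e + e² = p` and
`d̃² − d̃·ẽ + ẽ² = p̃`, then there is no `ℚ`-algebra isomorphism
`ℚ[x,y]/(x³, y(y+d̃x)(y+ẽx)) ≃ ℚ[x,y]/(x³, y(y+dx)(y+ex))` mapping the span of `x, y`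
onto the span of `x, y`. -/
theorem stmt11 (p pt : ℕ) (hp : p.Prime) (hpt : pt.Prime) (hne : p ≠ pt)
    (d e dt et : ℤ) (hde : d ^ 2 - d * e + e ^ 2 = (p : ℤ))
    (hdet : dt ^ 2 - dt * et + et ^ 2 = (pt : ℤ)) :
    ¬ ∃ φ : QR dt et ≃ₐ[ℚ] QR d e,
        Submodule.map φ.toLinearMap (qdeg2 dt et) = qdeg2 d e := by
  rintro ⟨φ, hmap⟩
  have hdeQ : (d:ℚ)^2 - (d:ℚ)*(e:ℚ) + (e:ℚ)^2 = (p:ℚ) := by exact_mod_cast hde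
  have hdetQ : (dt:ℚ)^2 - (dt:ℚ)*(et:ℚ) + (et:ℚ)^2 = (pt:ℚ) := by exact_mod_cast hdet
  -- the images of x and y lie in the span of x, y
  have hxmem : φ (qx dt et) ∈ qdeg2 d e := by
    rw [← hmap]
    exact ⟨qx dt et, Submodule.subset_span (Set.mem_insert _ _), rfl⟩
  have hymem : φ (qy dt et) ∈ qdeg2 d e := by
    rw [← hmap]
    exact ⟨qy dt et, Submodule.subset_span (Set.mem_insert_of_mem _ rfl), rfl⟩
  rw [qdeg2, Submodule.mem_span_pair] at hxmem hymem
  obtain ⟨a, b, hab⟩ := hxmem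
  obtain ⟨α, β, hαβ⟩ := hymem
  -- the cube of the image of x vanishes
  have hx3 : qx dt et ^ 3 = 0 := by
    rw [qx, ← map_pow, Ideal.Quotient.eq_zero_iff_mem]
    exact Ideal.subset_span (Set.mem_insert _ _)
  have hcube : (a • qx d e + b • qy d e) * (a • qx d e + b • qy d e) *
      (a • qx d e + b • qy d e) = 0 := by
    rw [hab, ← map_mul, ← map_mul,
      show qx dt et * qx dt et * qx dt et = qx dt et ^ 3 by ring, hx3, map_zero]
  obtain ⟨-, -, h12, h21⟩ := relA (prodMemQ hcube)
  obtain ⟨hB0, hB1, hB2⟩ := relB a a a b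
  rw [hB0, hB1] at h12
  rw [hB0, hB2] at h21
  -- hence b = 0
  have hb0 : b = 0 := by
    by_contra hb
    have hfac1 : (3*a - ((d:ℚ)+e)*b) * b^2 = 0 := by linear_combination h12
    have h12' : 3*a = ((d:ℚ)+e)*b := by
      rcases mul_eq_zero.mp hfac1 with h | h
      · linarith
      · exact absurd h (pow_ne_zero 2 hb)
    have hfac2 : (3*(a*a) - (d:ℚ)*e*b^2) * b = 0 := by linear_combination h21
    have h21' : 3*(a*a) = (d:ℚ)*e*b^2 := by
      rcases mul_eq_zero.mp hfac2 with h | h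
      · linarith
      · exact absurd h hb
    have hpz : (p:ℚ) * b^2 = 0 := by
      linear_combination (-(b^2)) * hdeQ - (3*a + ((d:ℚ)+e)*b) * h12' + 3 * h21'
    have hp0 : (p:ℚ) = 0 := by
      rcases mul_eq_zero.mp hpz with h | h
      · exact h
      · exact absurd h (pow_ne_zero 2 hb)
    exact hp.ne_zero (by exact_mod_cast hp0)
  rw [hb0, zero_smul, add_zero] at hab
  -- a ≠ 0
  have ha0 : a ≠ 0 := by
    intro h
    rw [h, zero_smul] at hab
    have hq0 : qx dt et = 0 := φ.injective (by rw [← hab, map_zero])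
    exact qx_ne_zero dt et hq0
  -- β ≠ 0
  have hβ0 : β ≠ 0 := by
    intro h
    rw [h, zero_smul, add_zero] at hαβ
    have hymem2 : qy d e ∈ Submodule.map φ.toLinearMap (qdeg2 dt et) := by
      rw [hmap]
      exact Submodule.subset_span (Set.mem_insert_of_mem _ rfl)
    obtain ⟨w, hw, hww⟩ := Submodule.mem_map.mp hymem2
    rw [qdeg2, Submodule.mem_span_pair] at hw
    obtain ⟨c1, c2, hc⟩ := hw
    have hyx : qy d e = (c1*a + c2*α) • qx d e := by
      rw [← hww, ← hc]
      simp only [map_add, map_smul, AlgEquiv.toLinearMap_apply]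
      rw [← hab, ← hαβ, smul_smul, smul_smul, ← add_smul]
    have : (c1*a + c2*α) • qx d e + (-1 : ℚ) • qy d e = 0 := by
      rw [← hyx]; simp
    have := (indep this).2
    norm_num at this
  -- the main relation
  have hrel : qy dt et * (qy dt et + (dt:ℚ) • qx dt et) *
      (qy dt et + (et:ℚ) • qx dt et) = 0 := by
    have hmem : (X 1 * (X 1 + (dt:ℚ) • X 0) * (X 1 + (et:ℚ) • X 0)) ∈ Qrel dt et :=
      Ideal.subset_span (Set.mem_insert_of_mem _ rfl)
    have h0 : mkA dt et (X 1 * (X 1 + (dt:ℚ) • X 0) * (X 1 + (et:ℚ) • X 0)) = 0 :=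
      Ideal.Quotient.eq_zero_iff_mem.mpr hmem
    simpa only [map_mul, map_add, map_smul, mkA_X0, mkA_X1] using h0
  have happ := congrArg φ hrel
  rw [map_zero, map_mul, map_mul, map_add, map_add, map_smul, map_smul,
    ← hab, ← hαβ] at happ
  have hshape1 : (α • qx d e + β • qy d e) + (dt:ℚ) • (a • qx d e)
      = (α + (dt:ℚ)*a) • qx d e + β • qy d e := by
    rw [smul_smul, add_smul]; abel
  have hshape2 : (α • qx d e + β • qy d e) + (et:ℚ) • (a • qx d e)
      = (α + (et:ℚ)*a) • qx d e + β • qy d e := by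
    rw [smul_smul, add_smul]; abel
  rw [hshape1, hshape2] at happ
  obtain ⟨-, -, E1, E2⟩ := relA (prodMemQ happ)
  obtain ⟨hC0, hC1, hC2⟩ := relB α (α + (dt:ℚ)*a) (α + (et:ℚ)*a) β
  rw [hC0, hC1] at E1
  rw [hC0, hC2] at E2
  have hfe1 : ((α + (α + (dt:ℚ)*a) + (α + (et:ℚ)*a)) - ((d:ℚ)+e)*β) * β^2 = 0 := by
    linear_combination E1
  have h1 : 3*α + ((dt:ℚ)+et)*a = ((d:ℚ)+e)*β := by
    rcases mul_eq_zero.mp hfe1 with h | h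
    · linarith
    · exact absurd h (pow_ne_zero 2 hβ0)
  have hfe2 : ((α*(α + (dt:ℚ)*a) + α*(α + (et:ℚ)*a) + (α + (dt:ℚ)*a)*(α + (et:ℚ)*a))
      - (d:ℚ)*e*β^2) * β = 0 := by
    linear_combination E2
  have h2 : α*(α + (dt:ℚ)*a) + α*(α + (et:ℚ)*a) + (α + (dt:ℚ)*a)*(α + (et:ℚ)*a)
      = (d:ℚ)*e*β^2 := by
    rcases mul_eq_zero.mp hfe2 with h | h
    · linarith
    · exact absurd h hβ0
  have hkey : (p:ℚ) * β^2 = (pt:ℚ) * a^2 := by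
    linear_combination (-(β^2)) * hdeQ + a^2 * hdetQ
      - (3*α + ((dt:ℚ)+et)*a + ((d:ℚ)+e)*β) * h1 + 3 * h2
  exact numth hp hpt hne ha0 hβ0 hkey
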